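/- arXiv:1501.02328 — 8 statements merged into one kernel-verified Lean document; each statement's English description precedes it below -/
import Mathlib

section
/- Let n ≥ 1 and consider the map π : Matrix (Fin n) (Fin n) ℝ → Sym(n,ℝ) × ℝ defined by π(X) = (X Xᵀ, det X). Then (i) the fibres of π coincide exactly with the orbits of the right action of SO(n) on n×n real matrices given by X ↦ X C⁻¹ for C ∈ SO(n) (i.e. π(X) = π(Y) if and only if Y = X C for some C ∈ SO(n)). -/
open Matrix


open Matrix

/-- The map `π : X ↦ (X Xᵀ, det X)` into (symmetric matrices) × ℝ. -/
noncomputable def piMap (n : ℕ) (X : Matrix (Fin n) (Fin n) ℝ) :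
    {A : Matrix (Fin n) (Fin n) ℝ // A.IsSymm} × ℝ :=
  (⟨X * Xᵀ, (Matrix.isSymm_mul_transpose_self X)⟩, X.det)

open scoped RealInnerProductSpace
private lemma vmv_mul {n : ℕ} (a b c d : Fin n → ℝ) :
    vecMulVec a b * vecMulVec c d = (b ⬝ᵥ c) • vecMulVec a d := by
  ext i j
  simp only [Matrix.mul_apply, vecMulVec_apply, Matrix.smul_apply, dotProduct, smul_eq_mul,
    Finset.sum_mul, Finset.mul_sum]
  apply Finset.sum_congr rfl; intros; ring

/-- A reflection fixing the rows of `X`, with determinant `-1`. -/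
private lemma exists_reflection {n : ℕ} (X : Matrix (Fin n) (Fin n) ℝ) (hX : X.det = 0) :
    ∃ D : Matrix (Fin n) (Fin n) ℝ, D * Dᵀ = 1 ∧ D.det = -1 ∧ X * D = X := by
  obtain ⟨v, hv0, hv⟩ := (Matrix.exists_mulVec_eq_zero_iff).mpr hX
  have hvv : 0 < v ⬝ᵥ v := by
    have hnn : 0 ≤ v ⬝ᵥ v := Finset.sum_nonneg fun i _ => mul_self_nonneg (v i)
    rcases lt_or_eq_of_le hnn with h | h
    · exact h
    · exact absurd ((dotProduct_self_eq_zero).mp h.symm) hv0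
  set u : Fin n → ℝ := (Real.sqrt (v ⬝ᵥ v))⁻¹ • v with hu
  have huu : u ⬝ᵥ u = 1 := by
    rw [hu, smul_dotProduct, dotProduct_smul, smul_eq_mul, smul_eq_mul,
      ← mul_assoc, ← mul_inv, ← Real.sqrt_mul_self (le_of_lt hvv)]
    field_simp
    rw [Real.sq_sqrt (by positivity)]
  have hXu : X *ᵥ u = 0 := by
    rw [hu, Matrix.mulVec_smul, hv, smul_zero]
  set W : Matrix (Fin n) (Fin n) ℝ := vecMulVec ((-2 : ℝ) • u) u with hW
  set D : Matrix (Fin n) (Fin n) ℝ := 1 + W with hD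
  have hWW : W * W = (-2 : ℝ) • W := by
    rw [hW, vmv_mul, dotProduct_smul, huu, smul_eq_mul, mul_one]
  have hWT : Wᵀ = W := by
    ext i j
    simp only [Matrix.transpose_apply, hW, vecMulVec_apply, Pi.smul_apply, smul_eq_mul]
    ring
  refine ⟨D, ?_, ?_, ?_⟩
  · rw [hD, Matrix.transpose_add, Matrix.transpose_one, hWT, add_mul, mul_add, mul_add,
      one_mul, mul_one, hWW]
    have : W + (W + (-2 : ℝ) • W) = 0 := by
      rw [neg_smul, two_smul]; abel
    rw [one_mul, add_assoc, this, add_zero]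
  · rw [hD, hW, vecMulVec_eq (Fin 1), Matrix.det_one_add_replicateCol_mul_replicateRow,
      dotProduct_smul, huu]
    norm_num
  · rw [hD, mul_add, mul_one, hW, vecMulVec_eq (Fin 1), ← Matrix.mul_assoc]
    have : X * Matrix.replicateCol (Fin 1) ((-2 : ℝ) • u) = 0 := by
      ext i k
      have h0 : (X *ᵥ ((-2 : ℝ) • u)) i = 0 := by
        rw [Matrix.mulVec_smul, hXu, smul_zero]; rfl
      simpa [Matrix.mul_apply, Matrix.replicateCol_apply, Matrix.mulVec, dotProduct] using h0
    rw [this, Matrix.zero_mul, add_zero]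

private lemma inner_eq_dot {n : ℕ} (a b : EuclideanSpace ℝ (Fin n)) :
    ⟪a, b⟫ = (WithLp.equiv 2 _ a) ⬝ᵥ (WithLp.equiv 2 _ b) := by
  simp [PiLp.inner_apply, dotProduct, RCLike.inner_apply, mul_comm]

private lemma dot_aux {n : ℕ} (M : Matrix (Fin n) (Fin n) ℝ) (u v : Fin n → ℝ) :
    (Mᵀ *ᵥ u) ⬝ᵥ (Mᵀ *ᵥ v) = u ᵥ* (M * Mᵀ) ⬝ᵥ v := by
  rw [mulVec_transpose, dotProduct_mulVec, vecMul_vecMul]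

private lemma exists_orth {n : ℕ} (X Y : Matrix (Fin n) (Fin n) ℝ)
    (h : X * Xᵀ = Y * Yᵀ) :
    ∃ C : Matrix (Fin n) (Fin n) ℝ, C * Cᵀ = 1 ∧ Y = X * C := by
  set E := EuclideanSpace ℝ (Fin n)
  set Lx : E →ₗ[ℝ] E := Matrix.toEuclideanLin Xᵀ with hLx
  set Ly : E →ₗ[ℝ] E := Matrix.toEuclideanLin Yᵀ with hLy
  have key : ∀ u v : E, ⟪Lx u, Lx v⟫ = ⟪Ly u, Ly v⟫ := by
    intro u v
    rw [inner_eq_dot, inner_eq_dot]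
    show (Xᵀ *ᵥ _) ⬝ᵥ (Xᵀ *ᵥ _) = (Yᵀ *ᵥ _) ⬝ᵥ (Yᵀ *ᵥ _)
    rw [dot_aux, dot_aux, h]
  have hker : LinearMap.ker Lx ≤ LinearMap.ker Ly := by
    intro v hv
    rw [LinearMap.mem_ker] at hv ⊢
    have h0 : ⟪Ly v, Ly v⟫ = 0 := by rw [← key, hv, inner_zero_left]
    exact inner_self_eq_zero.mp h0
  set f₀ : LinearMap.range Lx →ₗ[ℝ] E :=
    ((LinearMap.ker Lx).liftQ Ly hker).comp Lx.quotKerEquivRange.symm.toLinearMap with hf₀def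
  have hf₀ : ∀ v : E, f₀ ⟨Lx v, LinearMap.mem_range_self _ v⟩ = Ly v := by
    intro v
    rw [hf₀def]
    simp only [LinearMap.comp_apply, LinearEquiv.coe_coe]
    rw [Lx.quotKerEquivRange_symm_apply_image v, Submodule.mkQ_apply, Submodule.liftQ_apply]
  have hnorm : ∀ s : LinearMap.range Lx, ‖f₀ s‖ = ‖(s : E)‖ := by
    rintro ⟨s, v, rfl⟩
    rw [hf₀ v]
    have : ⟪Ly v, Ly v⟫ = ⟪Lx v, Lx v⟫ := (key v v).symm
    rw [@norm_eq_sqrt_re_inner ℝ, @norm_eq_sqrt_re_inner ℝ, this]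
  set fI : LinearMap.range Lx →ₗᵢ[ℝ] E := ⟨f₀, hnorm⟩ with hfI
  set g : E →ₗᵢ[ℝ] E := fI.extend with hgdef
  have hg : ∀ v : E, g (Lx v) = Ly v := by
    intro v
    have := fI.extend_apply ⟨Lx v, LinearMap.mem_range_self _ v⟩
    rw [hgdef]
    calc fI.extend (Lx v) = fI.extend ((⟨Lx v, LinearMap.mem_range_self _ v⟩ :
        LinearMap.range Lx) : E) := rfl
      _ = fI ⟨Lx v, LinearMap.mem_range_self _ v⟩ := this
      _ = Ly v := hf₀ v
  set M : Matrix (Fin n) (Fin n) ℝ := Matrix.toEuclideanLin.symm g.toLinearMap with hMdef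
  have hM : ∀ v : E, Matrix.toEuclideanLin M v = g v := by
    intro v
    rw [hMdef, LinearEquiv.apply_symm_apply]
    rfl
  have hmul : ∀ (A B : Matrix (Fin n) (Fin n) ℝ) (v : E),
      Matrix.toEuclideanLin (A * B) v = Matrix.toEuclideanLin A (Matrix.toEuclideanLin B v) := by
    intro A B v
    simp [Matrix.toEuclideanLin_apply, Matrix.mulVec_mulVec]
  have hMX : M * Xᵀ = Yᵀ := by
    apply Matrix.toEuclideanLin.injective
    ext v : 1
    rw [hmul, hM]
    exact hg v
  have horth : Mᵀ * M = 1 := by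
    have hdot : ∀ u v : Fin n → ℝ, u ᵥ* (Mᵀ * M) ⬝ᵥ v = u ᵥ* (1 : Matrix (Fin n) (Fin n) ℝ) ⬝ᵥ v := by
      intro u v
      have h1 := dot_aux Mᵀ u v
      rw [transpose_transpose] at h1
      have h2 : (M *ᵥ u) ⬝ᵥ (M *ᵥ v) = u ⬝ᵥ v := by
        have := g.inner_map_map ((WithLp.equiv 2 (Fin n → ℝ)).symm u)
          ((WithLp.equiv 2 (Fin n → ℝ)).symm v)
        rw [← hM, ← hM, inner_eq_dot, inner_eq_dot] at this
        simpa [Matrix.toEuclideanLin_apply] using this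
      rw [← h1, h2, vecMul_one]
    ext i j
    have := hdot (Pi.single i 1) (Pi.single j 1)
    simpa [Matrix.single_vecMul, dotProduct_single, Matrix.one_apply,
      Pi.single_apply, eq_comm] using this
  refine ⟨Mᵀ, ?_, ?_⟩
  · rw [transpose_transpose]; exact horth
  · -- Y = X * Mᵀ
    have := congrArg Matrix.transpose hMX
    rw [transpose_mul, transpose_transpose, transpose_transpose] at this
    exact this.symm


/-- The fibres of `π(X) = (X Xᵀ, det X)` coincide with the orbits of the right action
`X ↦ X C⁻¹` of `SO(n)`. -/
theorem stmt0 (n : ℕ) (hn : 1 ≤ n) (X Y : Matrix (Fin n) (Fin n) ℝ) :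
    piMap n X = piMap n Y ↔
      ∃ C : Matrix (Fin n) (Fin n) ℝ, C * Cᵀ = 1 ∧ C.det = 1 ∧ Y = X * C := by
  constructor
  · intro h
    have h1 : X * Xᵀ = Y * Yᵀ := congrArg (fun p => (p.1.1 : Matrix (Fin n) (Fin n) ℝ)) h
    have h2 : X.det = Y.det := congrArg Prod.snd h
    by_cases hdet : X.det = 0
    · obtain ⟨C₀, hC₀o, hC₀⟩ := exists_orth X Y h1
      have hdC : C₀.det = 1 ∨ C₀.det = -1 := by
        have := congrArg Matrix.det hC₀o
        rw [Matrix.det_mul, Matrix.det_transpose, Matrix.det_one] at this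
        exact mul_self_eq_one_iff.mp this
      rcases hdC with h1d | h1d
      · exact ⟨C₀, hC₀o, h1d, hC₀⟩
      · obtain ⟨D, hDo, hDd, hXD⟩ := exists_reflection X hdet
        refine ⟨D * C₀, ?_, ?_, ?_⟩
        · rw [Matrix.transpose_mul, Matrix.mul_assoc D, ← Matrix.mul_assoc C₀, hC₀o,
            Matrix.one_mul, hDo]
        · rw [Matrix.det_mul, hDd, h1d]; norm_num
        · rw [← Matrix.mul_assoc, hXD]; exact hC₀
    · have hU : IsUnit X.det := isUnit_iff_ne_zero.mpr hdet
      refine ⟨X⁻¹ * Y, ?_, ?_, ?_⟩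
      · rw [Matrix.transpose_mul, Matrix.mul_assoc, ← Matrix.mul_assoc Y, ← h1,
          Matrix.transpose_nonsing_inv, Matrix.mul_assoc X, Matrix.mul_nonsing_inv _
            (by rwa [Matrix.det_transpose]), Matrix.mul_one, Matrix.nonsing_inv_mul _ hU]
      · rw [Matrix.det_mul, Matrix.det_nonsing_inv, Ring.inverse_eq_inv, ← h2, inv_mul_cancel₀ hdet]
      · rw [← Matrix.mul_assoc, Matrix.mul_nonsing_inv _ hU, Matrix.one_mul]
  · rintro ⟨C, hCo, hCd, rfl⟩
    refine Prod.ext (Subtype.ext ?_) ?_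
    · show X * Xᵀ = X * C * (X * C)ᵀ
      rw [Matrix.transpose_mul, Matrix.mul_assoc, ← Matrix.mul_assoc C, hCo, Matrix.one_mul]
    · show X.det = (X * C).det
      rw [Matrix.det_mul, hCd, mul_one]
end

section
/- Let n ≥ 1. The image of the map π : Matrix (Fin n) (Fin n) ℝ → Sym(n,ℝ) × ℝ, π(X) = (X Xᵀ, det X), is exactly the set M(n,ℝ) = {(A, λ) ∈ Sym(n,ℝ) × ℝ : A is positive semidefinite and det A = λ²}. -/
open Matrix

/-- The image of `π(X) = (X Xᵀ, det X)` is exactly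
`M(n,ℝ) = {(A, λ) : A positive semidefinite, det A = λ²}`. -/
theorem stmt1 (n : ℕ) (hn : 1 ≤ n) :
    Set.range (piMap n) =
      {p : {A : Matrix (Fin n) (Fin n) ℝ // A.IsSymm} × ℝ |
        (p.1 : Matrix (Fin n) (Fin n) ℝ).PosSemidef ∧
        (p.1 : Matrix (Fin n) (Fin n) ℝ).det = p.2 ^ 2} := by
  ext ⟨⟨A, hAs⟩, l⟩
  simp only [Set.mem_range, Set.mem_setOf_eq, piMap, Prod.mk.injEq, Subtype.mk.injEq]
  constructor
  · rintro ⟨X, hX, hdet⟩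
    subst hX hdet
    refine ⟨?_, ?_⟩
    · have := Matrix.posSemidef_self_mul_conjTranspose X
      rwa [Matrix.conjTranspose_eq_transpose_of_trivial] at this
    · rw [Matrix.det_mul, Matrix.det_transpose, sq]
  · rintro ⟨hA, hdet⟩
    open MatrixOrder in set B := CFC.sqrt A with hB
    have hBB : B * B = A := by
      open MatrixOrder in exact CFC.sqrt_mul_sqrt_self A (Matrix.PosSemidef.nonneg hA)
    have hBsym : Bᵀ = B := by
      have := by open MatrixOrder in exact (CFC.sqrt_nonneg A).posSemidef.isHermitian
      rwa [Matrix.IsHermitian, Matrix.conjTranspose_eq_transpose_of_trivial] at this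
    have hdB : B.det * B.det = l ^ 2 := by
      rw [← Matrix.det_mul, hBB, hdet]
    have hcases : B.det = l ∨ B.det = -l := by
      exact mul_self_eq_mul_self_iff.mp (by rw [hdB, sq])
    rcases hcases with h | h
    · exact ⟨B, by rw [hBsym, hBB], h⟩
    · set D : Matrix (Fin n) (Fin n) ℝ :=
        Matrix.diagonal (fun i => if i = ⟨0, by omega⟩ then (-1 : ℝ) else 1) with hD
      have hDD : D * Dᵀ = 1 := by
        rw [hD, Matrix.diagonal_transpose, Matrix.diagonal_mul_diagonal]
        convert Matrix.diagonal_one using 2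
        ext i
        by_cases hi : i = ⟨0, by omega⟩ <;> simp [hi]
      have hdD : D.det = -1 := by
        rw [hD, Matrix.det_diagonal]
        rw [show (fun i : Fin n => if i = ⟨0, by omega⟩ then (-1 : ℝ) else 1) =
            fun i : Fin n => if i ∈ ({⟨0, by omega⟩} : Finset (Fin n)) then (-1 : ℝ) else 1 by
          ext i; simp]
        rw [Finset.prod_ite_mem, Finset.univ_inter, Finset.prod_singleton]
      refine ⟨B * D, ?_, ?_⟩
      · rw [Matrix.transpose_mul, hBsym, ← Matrix.mul_assoc, Matrix.mul_assoc B D,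
          hDD, Matrix.mul_one, hBB]
      · rw [Matrix.det_mul, hdD, h]; ring
end

section
/- Let n ≥ 1. The map from M(n,ℝ) = {(A, λ) ∈ Sym(n,ℝ) × ℝ : A positive semidefinite, det A = λ²} to (Sym(n,ℝ) / ℝ·I) × ℝ sending (A, λ) to (A + ℝ·I, λ) is a bijection, where A + ℝ·I denotes the image of A in the quotient of the real vector space Sym(n,ℝ) by the line spanned by the identity matrix I. -/
open Matrix

/-- The real vector space of real symmetric (self-adjoint) `n × n` matrices,
as a submodule of the matrix space. -/
abbrev SymSub (n : ℕ) : Submodule ℝ (Matrix (Fin n) (Fin n) ℝ) :=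
  selfAdjoint.submodule ℝ (Matrix (Fin n) (Fin n) ℝ)

lemma one_mem_symSub (n : ℕ) : (1 : Matrix (Fin n) (Fin n) ℝ) ∈ SymSub n :=
  IsSelfAdjoint.one _

lemma mulT_mem_symSub {n m : ℕ} (X : Matrix (Fin n) (Fin m) ℝ) : X * Xᵀ ∈ SymSub n := by
  have := Matrix.isHermitian_mul_conjTranspose_self X
  rw [Matrix.conjTranspose_eq_transpose_of_trivial] at this
  exact this

lemma conj_mem_symSub {n : ℕ} (C : Matrix (Fin n) (Fin n) ℝ) (A : SymSub n) :
    C * (A : Matrix (Fin n) (Fin n) ℝ) * Cᵀ ∈ SymSub n := by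
  have := Matrix.isHermitian_mul_mul_conjTranspose C (A.2 : (A : Matrix (Fin n) (Fin n) ℝ).IsHermitian)
  rw [Matrix.conjTranspose_eq_transpose_of_trivial] at this
  exact this

/-- The line `ℝ·I` inside the space of symmetric matrices. -/
noncomputable def lineI (n : ℕ) : Submodule ℝ (SymSub n) :=
  Submodule.span ℝ {(⟨1, one_mem_symSub n⟩ : SymSub n)}

/-- `M(n,ℝ)`: pairs `(A, λ)` with `A` symmetric positive semidefinite and `det A = λ²`. -/
def MSet (n : ℕ) : Set (SymSub n × ℝ) :=
  {q | (q.1 : Matrix (Fin n) (Fin n) ℝ).PosSemidef ∧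
    (q.1 : Matrix (Fin n) (Fin n) ℝ).det = q.2 ^ 2}

section Aux

variable {n : ℕ}

/-- Shift decomposition via the spectral theorem. -/
lemma shift_eq {B : Matrix (Fin n) (Fin n) ℝ} (hB : B.IsHermitian) (t : ℝ) :
    B + t • 1 = (Matrix.IsHermitian.eigenvectorUnitary hB : Matrix (Fin n) (Fin n) ℝ) *
      diagonal (fun i => hB.eigenvalues i + t) *
      star (Matrix.IsHermitian.eigenvectorUnitary hB : Matrix (Fin n) (Fin n) ℝ) := by
  set U := (Matrix.IsHermitian.eigenvectorUnitary hB : Matrix (Fin n) (Fin n) ℝ)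
  have hU : U * star U = 1 := Matrix.mem_unitaryGroup_iff.mp (Matrix.IsHermitian.eigenvectorUnitary hB).2
  have hdiag : (diagonal (fun i => hB.eigenvalues i + t) : Matrix (Fin n) (Fin n) ℝ)
      = diagonal (RCLike.ofReal ∘ hB.eigenvalues) + t • 1 := by
    rw [← diagonal_one, ← diagonal_smul, ← diagonal_add]
    congr 1
    ext i j
    by_cases h : i = j <;> simp [diagonal, h, Matrix.one_apply]
  rw [hdiag, mul_add, add_mul]
  congr 1
  · exact hB.spectral_theorem
  · rw [mul_smul_comm, smul_mul_assoc, mul_one, hU]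

lemma det_shift {B : Matrix (Fin n) (Fin n) ℝ} (hB : B.IsHermitian) (t : ℝ) :
    (B + t • 1).det = ∏ i, (hB.eigenvalues i + t) := by
  rw [shift_eq hB t, det_mul_right_comm]
  have hU : _ * star _ = (1 : Matrix (Fin n) (Fin n) ℝ) :=
    Matrix.mem_unitaryGroup_iff.mp (Matrix.IsHermitian.eigenvectorUnitary hB).2
  rw [hU]
  simp

lemma posSemidef_shift {B : Matrix (Fin n) (Fin n) ℝ} (hB : B.IsHermitian) {t : ℝ}
    (h : ∀ i, 0 ≤ hB.eigenvalues i + t) : (B + t • 1).PosSemidef := by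
  rw [shift_eq hB t, Matrix.star_eq_conjTranspose]
  exact (Matrix.posSemidef_diagonal_iff.mpr h).mul_mul_conjTranspose_same _

lemma det_lt_det_shift (hn : 1 ≤ n) {Q : Matrix (Fin n) (Fin n) ℝ} (hQ : Q.PosSemidef)
    {t : ℝ} (ht : 0 < t) : Q.det < (Q + t • 1).det := by
  have hH := hQ.1
  have hnn := hQ.eigenvalues_nonneg
  have hdet : Q.det = ∏ i, hH.eigenvalues i := by
    simpa using hH.det_eq_prod_eigenvalues
  rw [hdet, det_shift hH t]
  by_cases h0 : ∃ i, hH.eigenvalues i = 0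
  · obtain ⟨i, hi⟩ := h0
    rw [Finset.prod_eq_zero (Finset.mem_univ i) hi]
    exact Finset.prod_pos fun j _ => by have := hnn j; linarith
  · push_neg at h0
    refine Finset.prod_lt_prod_of_nonempty (fun i _ => ?_) (fun i _ => by linarith) ?_
    · exact lt_of_le_of_ne (hnn i) (Ne.symm (h0 i))
    · exact Finset.univ_nonempty_iff.mpr (Fin.pos_iff_nonempty.mp hn)

end Aux

/-- The map `M(n,ℝ) → (Sym(n,ℝ)/ℝ·I) × ℝ`, `(A, λ) ↦ (A + ℝ·I, λ)`, is a bijection. -/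
theorem stmt4 (n : ℕ) (hn : 1 ≤ n) :
    Function.Bijective (fun p : MSet n =>
      ((Submodule.Quotient.mk p.1.1 : SymSub n ⧸ lineI n), p.1.2)) := by
  constructor
  · -- injectivity
    rintro p q hpq
    simp only [Prod.mk.injEq] at hpq
    obtain ⟨h1, h2⟩ := hpq
    rw [Submodule.Quotient.eq, lineI, Submodule.mem_span_singleton] at h1
    obtain ⟨t, ht⟩ := h1
    have hmat : (p.1.1 : Matrix (Fin n) (Fin n) ℝ) = (q.1.1 : Matrix (Fin n) (Fin n) ℝ) + t • 1 := by
      have h' : t • (1 : Matrix (Fin n) (Fin n) ℝ)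
          = (p.1.1 : Matrix (Fin n) (Fin n) ℝ) - (q.1.1 : Matrix (Fin n) (Fin n) ℝ) :=
        congrArg Subtype.val ht
      rw [h']; abel
    have hdeteq : (p.1.1 : Matrix (Fin n) (Fin n) ℝ).det = (q.1.1 : Matrix (Fin n) (Fin n) ℝ).det := by
      rw [p.2.2, q.2.2, h2]
    have ht0 : t = 0 := by
      rcases lt_trichotomy t 0 with h | h | h
      · -- q = p + (-t) • 1
        have hq : (q.1.1 : Matrix (Fin n) (Fin n) ℝ)
            = (p.1.1 : Matrix (Fin n) (Fin n) ℝ) + (-t) • 1 := by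
          rw [hmat]; module
        have := det_lt_det_shift hn p.2.1 (t := -t) (by linarith)
        rw [← hq] at this
        exact absurd hdeteq (by linarith)
      · exact h
      · have := det_lt_det_shift hn q.2.1 (t := t) h
        rw [← hmat] at this
        exact absurd hdeteq (by linarith)
    have : p.1.1 = q.1.1 := by
      ext1
      rw [hmat, ht0]
      simp
    exact Subtype.ext (Prod.ext this h2)
  · -- surjectivity
    rintro ⟨c, l⟩
    obtain ⟨B, rfl⟩ := Submodule.Quotient.mk_surjective (lineI n) c
    have hB : (B : Matrix (Fin n) (Fin n) ℝ).IsHermitian := B.2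
    set β := hB.eigenvalues with hβ
    have hne : (Finset.univ : Finset (Fin n)).Nonempty :=
      Finset.univ_nonempty_iff.mpr (Fin.pos_iff_nonempty.mp hn)
    obtain ⟨i0, -, hi0⟩ := Finset.exists_min_image Finset.univ β hne
    set c0 : ℝ := max 1 (l ^ 2) with hc0
    have hc1 : (1 : ℝ) ≤ c0 := le_max_left _ _
    set a : ℝ := -β i0 with ha
    set b : ℝ := -β i0 + c0 with hb
    have hab : a ≤ b := by simp only [ha, hb]; linarith
    set f : ℝ → ℝ := fun t => ∏ i, (β i + t) with hf
    have hcont : ContinuousOn f (Set.Icc a b) :=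
      (continuous_finset_prod Finset.univ fun i _ =>
        (continuous_const.add continuous_id)).continuousOn
    have hfa : f a = 0 :=
      Finset.prod_eq_zero (Finset.mem_univ i0) (by simp [ha])
    have hfb : l ^ 2 ≤ f b := by
      calc l ^ 2 ≤ c0 := le_max_right _ _
        _ ≤ c0 ^ n := le_self_pow₀ hc1 (by omega)
        _ = ∏ _i : Fin n, c0 := by simp [Finset.prod_const]
        _ ≤ ∏ i, (β i + b) := by
            refine Finset.prod_le_prod (fun i _ => by linarith) (fun i _ => ?_)
            have := hi0 i (Finset.mem_univ i)
            simp only [hb]; linarith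
    have hmem : l ^ 2 ∈ Set.Icc (f a) (f b) := ⟨by rw [hfa]; positivity, hfb⟩
    obtain ⟨t, htmem, hft⟩ := intermediate_value_Icc hab hcont hmem
    have hta : a ≤ t := htmem.1
    have hpsd0 : ∀ i, 0 ≤ β i + t := fun i => by
      have := hi0 i (Finset.mem_univ i)
      simp only [ha] at hta; linarith
    have hpsd : ((B : Matrix (Fin n) (Fin n) ℝ) + t • 1).PosSemidef := posSemidef_shift hB hpsd0
    have hdet : ((B : Matrix (Fin n) (Fin n) ℝ) + t • 1).det = l ^ 2 := by
      rw [det_shift hB t]; exact hft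
    set A : SymSub n := B + t • ⟨1, one_mem_symSub n⟩ with hA
    have hAcoe : (A : Matrix (Fin n) (Fin n) ℝ) = (B : Matrix (Fin n) (Fin n) ℝ) + t • 1 := rfl
    have hmem' : (⟨A, l⟩ : SymSub n × ℝ) ∈ MSet n :=
      ⟨by rw [hAcoe]; exact hpsd, by rw [hAcoe]; exact hdet⟩
    refine ⟨⟨⟨A, l⟩, hmem'⟩, ?_⟩
    simp only [Prod.mk.injEq]
    refine ⟨?_, trivial⟩
    rw [Submodule.Quotient.eq, lineI]
    have : A - B = t • (⟨1, one_mem_symSub n⟩ : SymSub n) := by rw [hA]; abel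
    rw [this]
    exact Submodule.smul_mem _ t (Submodule.mem_span_singleton_self _)
end

section
/- Let n ≥ 1 and let S₀(n,ℝ) denote the set of real symmetric n×n matrices that are positive semidefinite and singular (determinant zero). Then the map S₀(n,ℝ) → Sym(n,ℝ)/ℝ·I sending A to its coset A + ℝ·I is a bijection; i.e., every coset of ℝ·I in Sym(n,ℝ) contains exactly one singular positive semidefinite matrix. -/
open Matrix

/-- `S₀(n,ℝ)`: singular positive semidefinite symmetric matrices. -/
def S0 (n : ℕ) : Set (SymSub n) :=
  {A | (A : Matrix (Fin n) (Fin n) ℝ).PosSemidef ∧ (A : Matrix (Fin n) (Fin n) ℝ).det = 0}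

/-- If `A` is PSD and singular and `A = B + c • 1` with `B` PSD, then `c ≤ 0`. -/
lemma aux_c_nonpos {n : ℕ} {A B : Matrix (Fin n) (Fin n) ℝ} {c : ℝ}
    (_hA : A.PosSemidef) (hAdet : A.det = 0) (hB : B.PosSemidef)
    (h : A = B + c • (1 : Matrix (Fin n) (Fin n) ℝ)) : c ≤ 0 := by
  obtain ⟨x, hx, hAx⟩ := (Matrix.exists_mulVec_eq_zero_iff).mpr hAdet
  have hxx : 0 < x ⬝ᵥ x := by
    rcases lt_or_eq_of_le (Finset.sum_nonneg fun i _ => mul_self_nonneg (x i)) with h' | h'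
    · exact h'
    · exact absurd (dotProduct_self_eq_zero.mp h'.symm) hx
  have hBx : 0 ≤ x ⬝ᵥ (B *ᵥ x) := by simpa using hB.dotProduct_mulVec_nonneg x
  have key : 0 = x ⬝ᵥ (B *ᵥ x) + c * (x ⬝ᵥ x) := by
    have := congrArg (fun M => x ⬝ᵥ (M *ᵥ x)) h
    simpa [Matrix.add_mulVec, Matrix.smul_mulVec, dotProduct_add,
      dotProduct_smul, smul_eq_mul, hAx] using this
  nlinarith

/-- The map `S₀(n,ℝ) → Sym(n,ℝ)/ℝ·I`, `A ↦ A + ℝ·I`, is a bijection: every coset of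
`ℝ·I` contains exactly one singular positive semidefinite matrix. -/
theorem stmt6 (n : ℕ) (hn : 1 ≤ n) :
    Function.Bijective (fun A : S0 n =>
      (Submodule.Quotient.mk A.1 : SymSub n ⧸ lineI n)) := by
  constructor
  · -- injectivity
    rintro ⟨A, hApsd, hAdet⟩ ⟨B, hBpsd, hBdet⟩ h
    simp only [Submodule.Quotient.eq] at h
    rw [lineI, Submodule.mem_span_singleton] at h
    obtain ⟨c, hc⟩ := h
    have hc' : (A : Matrix (Fin n) (Fin n) ℝ) - B = c • (1 : Matrix (Fin n) (Fin n) ℝ) := by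
      have := congrArg (Subtype.val) hc
      simpa using this.symm
    have hAB : (A : Matrix (Fin n) (Fin n) ℝ) = (B : Matrix (Fin n) (Fin n) ℝ)
        + c • (1 : Matrix (Fin n) (Fin n) ℝ) := by
      rw [← hc']; abel
    have hBA : (B : Matrix (Fin n) (Fin n) ℝ) = (A : Matrix (Fin n) (Fin n) ℝ)
        + (-c) • (1 : Matrix (Fin n) (Fin n) ℝ) := by
      rw [hAB]; simp
    have h1 : c ≤ 0 := aux_c_nonpos hApsd hAdet hBpsd hAB
    have h2 : -c ≤ 0 := aux_c_nonpos hBpsd hBdet hApsd hBA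
    have hc0 : c = 0 := le_antisymm h1 (by linarith)
    ext1
    ext1
    rw [hAB, hc0]; simp
  · -- surjectivity
    intro q
    obtain ⟨A, rfl⟩ := Submodule.Quotient.mk_surjective _ q
    have hH : (A : Matrix (Fin n) (Fin n) ℝ).IsHermitian := A.2
    haveI : Nonempty (Fin n) := ⟨⟨0, hn⟩⟩
    obtain ⟨i₀, -, hi₀⟩ := Finset.exists_min_image Finset.univ hH.eigenvalues
      ⟨⟨0, hn⟩, Finset.mem_univ _⟩
    set μ := hH.eigenvalues i₀ with hμ
    set U : Matrix (Fin n) (Fin n) ℝ := (hH.eigenvectorUnitary : Matrix (Fin n) (Fin n) ℝ)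
    set D : Matrix (Fin n) (Fin n) ℝ := Matrix.diagonal (fun i => hH.eigenvalues i - μ)
    have hspec : (A : Matrix (Fin n) (Fin n) ℝ)
        = U * Matrix.diagonal (RCLike.ofReal ∘ hH.eigenvalues) * star U := hH.spectral_theorem
    have hUU : U * star U = 1 := (Unitary.mem_iff.mp hH.eigenvectorUnitary.2).2
    -- B = A - μ • 1
    refine ⟨⟨A - μ • ⟨1, one_mem_symSub n⟩, ?_, ?_⟩, ?_⟩
    · -- PSD
      have hB : ((A - μ • ⟨1, one_mem_symSub n⟩ : SymSub n) : Matrix (Fin n) (Fin n) ℝ)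
          = U * D * star U := by
        have hD : Matrix.diagonal (RCLike.ofReal ∘ hH.eigenvalues)
            = D + μ • (1 : Matrix (Fin n) (Fin n) ℝ) := by
          ext i j
          rcases eq_or_ne i j with rfl | h
          · simp [D, Matrix.one_apply_eq]
          · simp [D, Matrix.diagonal_apply_ne _ h, Matrix.one_apply_ne h]
        push_cast
        rw [hspec, hD]
        rw [Matrix.mul_add, Matrix.add_mul, Matrix.mul_smul, Matrix.smul_mul,
          Matrix.mul_one, hUU]
        abel
      rw [hB]
      have hD : D.PosSemidef := Matrix.PosSemidef.diagonal (fun i => by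
        simp only [Pi.zero_apply, sub_nonneg]; exact hi₀ i (Finset.mem_univ i))
      have := hD.mul_mul_conjTranspose_same U
      rw [Matrix.star_eq_conjTranspose]; exact this
    · -- det = 0
      have hB : ((A - μ • ⟨1, one_mem_symSub n⟩ : SymSub n) : Matrix (Fin n) (Fin n) ℝ)
          = U * D * star U := by
        have hD : Matrix.diagonal (RCLike.ofReal ∘ hH.eigenvalues)
            = D + μ • (1 : Matrix (Fin n) (Fin n) ℝ) := by
          ext i j
          rcases eq_or_ne i j with rfl | h
          · simp [D, Matrix.one_apply_eq]
          · simp [D, Matrix.diagonal_apply_ne _ h, Matrix.one_apply_ne h]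
        push_cast
        rw [hspec, hD]
        rw [Matrix.mul_add, Matrix.add_mul, Matrix.mul_smul, Matrix.smul_mul,
          Matrix.mul_one, hUU]
        abel
      rw [hB]
      have hDdet : D.det = 0 := by
        rw [Matrix.det_diagonal]
        exact Finset.prod_eq_zero (Finset.mem_univ i₀) (by simp [hμ])
      rw [Matrix.det_mul, Matrix.det_mul, hDdet, mul_zero, zero_mul]
    · -- same coset
      simp only [Submodule.Quotient.eq]
      rw [lineI, Submodule.mem_span_singleton]
      exact ⟨-μ, by simp⟩
end

section
/- Let n ≥ 1. The map φ : Matrix (Fin n) (Fin n) ℝ → (Sym(n,ℝ)/ℝ·I) × ℝ, φ(X) = (X Xᵀ + ℝ·I, det X), is surjective, and its fibres coincide exactly with the orbits of the right action of SO(n) given by X ↦ X C⁻¹: that is, φ(X) = φ(Y) if and only if Y = X C for some C ∈ SO(n). -/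
open Matrix


-- helper: spectral shift
lemma spectral_shift {n : ℕ} {A : Matrix (Fin n) (Fin n) ℝ} (hA : A.IsHermitian) (r : ℝ) :
    A + r • (1 : Matrix (Fin n) (Fin n) ℝ) =
      (hA.eigenvectorUnitary : Matrix (Fin n) (Fin n) ℝ) *
        diagonal (fun i => hA.eigenvalues i + r) *
        star (hA.eigenvectorUnitary : Matrix (Fin n) (Fin n) ℝ) := by
  have hU : (hA.eigenvectorUnitary : Matrix (Fin n) (Fin n) ℝ) *
      star (hA.eigenvectorUnitary : Matrix (Fin n) (Fin n) ℝ) = 1 :=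
    (Matrix.mem_unitaryGroup_iff).mp (hA.eigenvectorUnitary).2
  have hd : diagonal (fun i => hA.eigenvalues i + r)
      = diagonal (RCLike.ofReal ∘ hA.eigenvalues) + r • (1 : Matrix (Fin n) (Fin n) ℝ) := by
    ext i j
    rcases eq_or_ne i j with rfl | hij
    · simp [Matrix.one_apply]
    · simp [Matrix.diagonal_apply_ne _ hij, Matrix.one_apply_ne hij]
  rw [hd, Matrix.mul_add, Matrix.add_mul, ← Unitary.conjStarAlgAut_apply (S := ℝ), ← hA.spectral_theorem]
  congr 1
  rw [Matrix.mul_smul, Matrix.smul_mul, mul_one, hU]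

lemma det_add_smul_one {n : ℕ} {A : Matrix (Fin n) (Fin n) ℝ} (hA : A.IsHermitian) (r : ℝ) :
    (A + r • (1 : Matrix (Fin n) (Fin n) ℝ)).det = ∏ i, (hA.eigenvalues i + r) := by
  rw [spectral_shift hA r, Matrix.det_mul_right_comm,
    (Matrix.mem_unitaryGroup_iff).mp (hA.eigenvectorUnitary).2, one_mul, det_diagonal]

lemma posSemidef_add_smul_one {n : ℕ} {A : Matrix (Fin n) (Fin n) ℝ} (hA : A.IsHermitian)
    {r : ℝ} (h : ∀ i, 0 ≤ hA.eigenvalues i + r) :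
    (A + r • (1 : Matrix (Fin n) (Fin n) ℝ)).PosSemidef := by
  rw [spectral_shift hA r]
  have := (Matrix.posSemidef_diagonal_iff.mpr h).mul_mul_conjTranspose_same
    (hA.eigenvectorUnitary : Matrix (Fin n) (Fin n) ℝ)
  simpa [Matrix.star_eq_conjTranspose] using this

noncomputable section

variable {n : ℕ}

local notation "V" => EuclideanSpace ℝ (Fin n)
local notation "E" => WithLp.linearEquiv 2 ℝ (Fin n → ℝ)

/-- linear map on Euclidean space induced by `Mᵀ *ᵥ ·`. -/
def matLin (M : Matrix (Fin n) (Fin n) ℝ) : V →ₗ[ℝ] V :=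
  (E).symm.toLinearMap ∘ₗ (Mᵀ).mulVecLin ∘ₗ (E).toLinearMap

lemma matLin_apply (M : Matrix (Fin n) (Fin n) ℝ) (v : V) :
    matLin M v = (E).symm (Mᵀ *ᵥ (E) v) := rfl

lemma inner_matLin (M : Matrix (Fin n) (Fin n) ℝ) (v : V) :
    (inner ℝ (matLin M v) (matLin M v) : ℝ) = (E) v ⬝ᵥ ((M * Mᵀ) *ᵥ (E) v) := by
  rw [matLin_apply]
  rw [PiLp.inner_apply]
  simp only [RCLike.inner_apply, starRingEnd_apply, star_trivial]
  simp only [WithLp.coe_symm_linearEquiv, WithLp.ofLp_toLp]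
  rw [show (∑ i, (Mᵀ *ᵥ (E) v) i * (Mᵀ *ᵥ (E) v) i) = (Mᵀ *ᵥ (E) v) ⬝ᵥ (Mᵀ *ᵥ (E) v) from rfl]
  conv_rhs => rw [← Matrix.mulVec_mulVec, Matrix.dotProduct_mulVec, ← Matrix.mulVec_transpose]

lemma exists_orthogonal (X Y : Matrix (Fin n) (Fin n) ℝ) (h : X * Xᵀ = Y * Yᵀ) :
    ∃ C : Matrix (Fin n) (Fin n) ℝ, C * Cᵀ = 1 ∧ Y = X * C := by
  set f := matLin X with hf
  set g := matLin Y with hg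
  have hnorm : ∀ v : V, ‖f v‖ = ‖g v‖ := by
    intro v
    rw [@norm_eq_sqrt_re_inner ℝ, @norm_eq_sqrt_re_inner ℝ, inner_matLin, inner_matLin, h]
  have hker : LinearMap.ker f = LinearMap.ker g := by
    ext v
    rw [LinearMap.mem_ker, LinearMap.mem_ker, ← norm_eq_zero, hnorm, norm_eq_zero]
  -- the isometry from range f to V sending f v to g v
  set L0 : (LinearMap.range f) →ₗ[ℝ] V :=
    (LinearMap.range g).subtype ∘ₗ (g.quotKerEquivRange.toLinearMap) ∘ₗ
      (Submodule.quotEquivOfEq _ _ hker).toLinearMap ∘ₗ f.quotKerEquivRange.symm.toLinearMap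
    with hL0def
  have hL0 : ∀ v : V, L0 ⟨f v, LinearMap.mem_range_self f v⟩ = g v := by
    intro v
    have h1 : f.quotKerEquivRange.symm ⟨f v, LinearMap.mem_range_self f v⟩
        = Submodule.Quotient.mk v := f.quotKerEquivRange_symm_apply_image v _
    simp only [hL0def, LinearMap.coe_comp, Function.comp_apply, LinearEquiv.coe_coe, h1,
      Submodule.quotEquivOfEq_mk, Submodule.coe_subtype]
    exact g.quotKerEquivRange_apply_mk v
  set L : (LinearMap.range f) →ₗᵢ[ℝ] V :=
    ⟨L0, by rintro ⟨-, v, rfl⟩; rw [hL0]; exact (hnorm v).symm⟩ with hLdef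
  set Φ := L.extend with hPhi
  have hΦ : ∀ v : V, Φ (f v) = g v := by
    intro v
    have h2 := L.extend_apply ⟨f v, LinearMap.mem_range_self f v⟩
    have h3 : (L ⟨f v, LinearMap.mem_range_self f v⟩ : V) = g v := hL0 v
    rw [← h3, ← h2]
  -- the matrix of Φ
  set D : Matrix (Fin n) (Fin n) ℝ :=
    LinearMap.toMatrix' ((E).toLinearMap ∘ₗ Φ.toLinearMap ∘ₗ (E).symm.toLinearMap) with hD
  have hDmul : ∀ w : Fin n → ℝ, D *ᵥ w = (E) (Φ ((E).symm w)) := by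
    intro w
    rw [← Matrix.toLin'_apply, hD, Matrix.toLin'_toMatrix']
    rfl
  have hDorth : Dᵀ * D = 1 := by
    ext i j
    have hcol : ∀ k : Fin n, ∀ l, D l k = ((E) (Φ ((E).symm (Pi.single k 1)))) l := by
      intro k l
      have := congrFun (hDmul (Pi.single k 1)) l
      simpa using this
    have : (Dᵀ * D) i j
        = (inner ℝ (Φ ((E).symm (Pi.single i 1))) (Φ ((E).symm (Pi.single j 1))) : ℝ) := by
      rw [Matrix.mul_apply, PiLp.inner_apply]
      simp only [RCLike.inner_apply, starRingEnd_apply, star_trivial, Matrix.transpose_apply]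
      exact Finset.sum_congr rfl fun k _ => by rw [hcol i k, hcol j k, mul_comm]; rfl
    rw [this, Φ.inner_map_map, PiLp.inner_apply]
    simp only [RCLike.inner_apply, starRingEnd_apply, star_trivial,
      WithLp.coe_symm_linearEquiv, WithLp.ofLp_toLp]
    rcases eq_or_ne i j with rfl | hij
    · simp [Pi.single_apply, Matrix.one_apply]
    · simp [Pi.single_apply, Matrix.one_apply, hij, Ne.symm hij]
  have hYX : Yᵀ = D * Xᵀ := by
    have hv : ∀ w : Fin n → ℝ, (D * Xᵀ) *ᵥ w = Yᵀ *ᵥ w := by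
      intro w
      rw [← Matrix.mulVec_mulVec, hDmul]
      have h1 : (E).symm (Xᵀ *ᵥ w) = f ((E).symm w) := by
        rw [hf, matLin_apply, LinearEquiv.apply_symm_apply]
      have := hΦ ((E).symm w)
      rw [h1, this, hg, matLin_apply, LinearEquiv.apply_symm_apply,
        LinearEquiv.apply_symm_apply]
    ext i j
    have := congrFun (hv (Pi.single j 1)) i
    simpa [Matrix.mulVec_single] using this.symm
  refine ⟨Dᵀ, by rw [Matrix.transpose_transpose]; exact hDorth, ?_⟩
  have := congrArg Matrix.transpose hYX
  rw [Matrix.transpose_transpose, Matrix.transpose_mul, Matrix.transpose_transpose] at this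
  exact this

lemma exists_reflection_fixing {n : ℕ} (X : Matrix (Fin n) (Fin n) ℝ) (hX : X.det = 0) :
    ∃ R : Matrix (Fin n) (Fin n) ℝ, R * Rᵀ = 1 ∧ R.det = -1 ∧ X * R = X := by
  obtain ⟨v, hv0, hvX⟩ := (Matrix.exists_mulVec_eq_zero_iff).mpr hX
  set s : ℝ := v ⬝ᵥ v with hs
  have hsnn : 0 ≤ s := Finset.sum_nonneg fun i _ => mul_self_nonneg (v i)
  have hspos : 0 < s := by
    rcases hsnn.lt_or_eq with h | h
    · exact h
    · exact absurd ((dotProduct_self_eq_zero).mp h.symm) hv0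
  set M : Matrix (Fin n) (Fin n) ℝ := vecMulVec v v with hM
  have hMT : Mᵀ = M := by
    ext i j; simp [hM, vecMulVec_apply, mul_comm]
  have hMM : M * M = s • M := by
    ext i j
    simp only [hM, Matrix.mul_apply, vecMulVec_apply, Matrix.smul_apply, smul_eq_mul, hs,
      dotProduct]
    rw [Finset.sum_mul]
    exact Finset.sum_congr rfl fun k _ => by ring
  set R : Matrix (Fin n) (Fin n) ℝ := 1 - (2 / s) • M with hR
  have hRT : Rᵀ = R := by
    rw [hR, Matrix.transpose_sub, Matrix.transpose_one, Matrix.transpose_smul, hMT]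
  have hXM : X * M = 0 := by
    ext i j
    simp only [hM, Matrix.mul_apply, vecMulVec_apply, Matrix.zero_apply]
    have h2 : ∑ k, X i k * (v k * v j) = (∑ k, X i k * v k) * v j := by
      rw [Finset.sum_mul]; exact Finset.sum_congr rfl fun k _ => by ring
    have h3 : ∑ k, X i k * v k = 0 := congrFun hvX i
    rw [h2, h3, zero_mul]
  refine ⟨R, ?_, ?_, ?_⟩
  · rw [hRT, hR]
    rw [sub_mul, mul_sub, mul_sub, one_mul, mul_one, Matrix.smul_mul, Matrix.mul_smul,
      Matrix.mul_smul, hMM, smul_smul, smul_smul]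
    rw [one_mul, show 2 / s * (2 / s) * s = 2 / s + 2 / s by field_simp; ring, add_smul]
    abel
  · have hMcr : (-(2 / s)) • M = vecMulVec ((-(2 / s)) • v) v := by
      ext i j; simp [hM, vecMulVec_apply]; ring
    have : R = 1 + Matrix.replicateCol (Fin 1) ((-(2 / s)) • v) * Matrix.replicateRow (Fin 1) v := by
      erw [← Matrix.vecMulVec_eq (Fin 1), ← hMcr, hR, sub_eq_add_neg, neg_smul]
    rw [this]; erw [Matrix.det_one_add_replicateCol_mul_replicateRow]
    rw [dotProduct_smul]
    simp only [smul_eq_mul, ← hs]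
    field_simp
    ring
  · rw [hR, mul_sub, mul_one, Matrix.mul_smul, hXM, smul_zero, sub_zero]

lemma det_lt_det_add_smul_one {n : ℕ} (hn : 1 ≤ n) {A : Matrix (Fin n) (Fin n) ℝ}
    (hA : A.PosSemidef) {r : ℝ} (hr : 0 < r) : A.det < (A + r • 1).det := by
  have h1 : A.det = ∏ i, hA.1.eigenvalues i := by
    rw [hA.1.det_eq_prod_eigenvalues]; simp
  rw [det_add_smul_one hA.1 r, h1]
  have hne : (Finset.univ : Finset (Fin n)).Nonempty := ⟨⟨0, hn⟩, Finset.mem_univ _⟩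
  by_cases hz : ∀ i, 0 < hA.1.eigenvalues i
  · exact Finset.prod_lt_prod_of_nonempty (fun i _ => hz i)
      (fun i _ => by linarith [hz i]) hne
  · push_neg at hz
    obtain ⟨i, hi⟩ := hz
    have hi0 : hA.1.eigenvalues i = 0 := le_antisymm hi (hA.eigenvalues_nonneg i)
    rw [Finset.prod_eq_zero (Finset.mem_univ i) hi0]
    exact Finset.prod_pos fun j _ => by linarith [hA.eigenvalues_nonneg j]

/-- The map `φ : X ↦ (X Xᵀ + ℝ·I, det X)`. -/
noncomputable def phi (n : ℕ) (X : Matrix (Fin n) (Fin n) ℝ) :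
    (SymSub n ⧸ lineI n) × ℝ :=
  (Submodule.Quotient.mk ⟨X * Xᵀ, mulT_mem_symSub X⟩, X.det)

/-- `φ(X) = (X Xᵀ + ℝ·I, det X)` is surjective, and its fibres coincide with the orbits
of the right action `X ↦ X C⁻¹` of `SO(n)`. -/
theorem stmt8 (n : ℕ) (hn : 1 ≤ n) :
    Function.Surjective (phi n) ∧
    ∀ X Y : Matrix (Fin n) (Fin n) ℝ,
      phi n X = phi n Y ↔
        ∃ C : Matrix (Fin n) (Fin n) ℝ, C * Cᵀ = 1 ∧ C.det = 1 ∧ Y = X * C := by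
  have hCT : ∀ (S : Matrix (Fin n) (Fin n) ℝ), S.IsHermitian → Sᵀ = S := by
    intro S hS
    have := hS.eq; rwa [Matrix.conjTranspose_eq_transpose_of_trivial] at this
  constructor
  · -- surjectivity
    rintro ⟨q, t⟩
    obtain ⟨a, rfl⟩ := Submodule.Quotient.mk_surjective (lineI n) q
    have hA : (a : Matrix (Fin n) (Fin n) ℝ).IsHermitian := a.2
    set A := (a : Matrix (Fin n) (Fin n) ℝ) with hAdef
    set lam := hA.eigenvalues with hlam
    have hne : (Finset.univ : Finset (Fin n)).Nonempty := ⟨⟨0, hn⟩, Finset.mem_univ _⟩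
    set μ := Finset.univ.inf' hne lam with hmu
    have hmule : ∀ i, μ ≤ lam i := fun i => Finset.inf'_le lam (Finset.mem_univ i)
    obtain ⟨i0, -, hi0⟩ := Finset.exists_mem_eq_inf' hne lam
    set F : ℝ → ℝ := fun c => ∏ i, (lam i + c) with hF
    have hFcont : Continuous F := by
      apply continuous_finset_prod
      intro i _
      exact continuous_const.add continuous_id
    have hF0 : F (-μ) = 0 := by
      refine Finset.prod_eq_zero (Finset.mem_univ i0) ?_
      rw [← hi0, ← hmu]; ring
    set c1 : ℝ := -μ + max 1 (t ^ 2) with hc1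
    have h1le : (1:ℝ) ≤ max 1 (t ^ 2) := le_max_left _ _
    have hmlec1 : -μ ≤ c1 := by
      rw [hc1]; linarith
    have hF1 : t ^ 2 ≤ F c1 := by
      refine le_trans (le_max_right 1 (t ^ 2)) ?_
      have hstep : ∏ i, (if i = i0 then max 1 (t ^ 2) else 1) ≤ ∏ i, (lam i + c1) := by
        refine Finset.prod_le_prod (fun i _ => ?_) (fun i _ => ?_)
        · split <;> [linarith; norm_num]
        · rcases eq_or_ne i i0 with h | h
          · rw [if_pos h]
            have hl : lam i = μ := by rw [h, hmu, hi0]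
            rw [hc1]; linarith
          · rw [if_neg h]
            have := hmule i; rw [hc1]; linarith
      calc max 1 (t ^ 2) = ∏ i, (if i = i0 then max 1 (t ^ 2) else 1) := by
            rw [Finset.prod_ite_eq' Finset.univ i0 (fun _ => max 1 (t ^ 2))]
            simp
        _ ≤ F c1 := hstep
    have hmem : t ^ 2 ∈ Set.Icc (F (-μ)) (F c1) := ⟨by rw [hF0]; positivity, hF1⟩
    obtain ⟨c, hc, hFc⟩ := intermediate_value_Icc hmlec1 hFcont.continuousOn hmem
    have hcge : -μ ≤ c := hc.1
    have hPsd : (A + c • (1 : Matrix (Fin n) (Fin n) ℝ)).PosSemidef :=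
      posSemidef_add_smul_one hA (fun i => by have := hmule i; linarith)
    set P := A + c • (1 : Matrix (Fin n) (Fin n) ℝ) with hP
    have hdetP : P.det = t ^ 2 := by
      rw [hP, det_add_smul_one hA c]; exact hFc
    open MatrixOrder in set S := CFC.sqrt P with hSdef
    have hSS : S * S = P := by open MatrixOrder in exact CFC.sqrt_mul_sqrt_self P hPsd.nonneg
    have hST : Sᵀ = S := hCT S (by open MatrixOrder in exact (CFC.sqrt_nonneg P).posSemidef.isHermitian)
    have hdS : S.det * S.det = t ^ 2 := by
      rw [← Matrix.det_mul, hSS, hdetP]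
    have hcases : S.det = t ∨ S.det = -t := by
      have h0 : (S.det - t) * (S.det + t) = 0 := by nlinarith [hdS]
      rcases mul_eq_zero.mp h0 with h | h
      · left; linarith
      · right; linarith
    -- the witness X, with X * Xᵀ = P and X.det = t
    have key : ∀ X : Matrix (Fin n) (Fin n) ℝ, X * Xᵀ = P → X.det = t →
        phi n X = (Submodule.Quotient.mk a, t) := by
      intro X h1 h2
      refine Prod.ext ?_ h2
      show Submodule.Quotient.mk _ = Submodule.Quotient.mk a
      rw [Submodule.Quotient.eq]
      rw [lineI, Submodule.mem_span_singleton]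
      refine ⟨c, ?_⟩
      apply Subtype.ext
      show c • (1 : Matrix (Fin n) (Fin n) ℝ) = X * Xᵀ - A
      rw [h1, hP]; abel
    rcases hcases with hdt | hdt
    · exact ⟨S, key S (by rw [hST, hSS]) hdt⟩
    · set i1 : Fin n := ⟨0, hn⟩ with hi1
      set R : Matrix (Fin n) (Fin n) ℝ := diagonal (fun i => if i = i1 then -1 else 1) with hRdef
      have hRT : Rᵀ = R := by rw [hRdef, Matrix.diagonal_transpose]
      have hRR : R * R = 1 := by
        rw [hRdef, Matrix.diagonal_mul_diagonal, ← Matrix.diagonal_one]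
        refine congrArg Matrix.diagonal ?_
        funext i
        by_cases h : i = i1 <;> simp [h]
      have hdR : R.det = -1 := by
        rw [hRdef, Matrix.det_diagonal]
        rw [Finset.prod_ite_eq' Finset.univ i1 (fun _ => (-1 : ℝ))]
        simp
      refine ⟨S * R, key _ ?_ ?_⟩
      · rw [Matrix.transpose_mul, hRT, hST, Matrix.mul_assoc, ← Matrix.mul_assoc R R S,
          hRR, Matrix.one_mul, hSS]
      · rw [Matrix.det_mul, hdR, hdt]; ring
  · -- fibres
    intro X Y
    constructor
    · intro hphi
      have h1 : (Submodule.Quotient.mk ⟨X * Xᵀ, mulT_mem_symSub X⟩ :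
          SymSub n ⧸ lineI n) = Submodule.Quotient.mk ⟨Y * Yᵀ, mulT_mem_symSub Y⟩ :=
        congrArg Prod.fst hphi
      have h2 : X.det = Y.det := congrArg Prod.snd hphi
      rw [Submodule.Quotient.eq, lineI, Submodule.mem_span_singleton] at h1
      obtain ⟨r, hr⟩ := h1
      have hr' : X * Xᵀ - Y * Yᵀ = r • (1 : Matrix (Fin n) (Fin n) ℝ) := by
        have h3 := congrArg Subtype.val hr
        simpa using h3.symm
      have hconj : ∀ Z : Matrix (Fin n) (Fin n) ℝ, Zᴴ = Zᵀ := by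
        intro Z; ext i j; simp [Matrix.conjTranspose_apply]
      have hXps : (X * Xᵀ).PosSemidef := by
        rw [← hconj]; exact Matrix.posSemidef_self_mul_conjTranspose X
      have hYps : (Y * Yᵀ).PosSemidef := by
        rw [← hconj]; exact Matrix.posSemidef_self_mul_conjTranspose Y
      have hdet2 : (X * Xᵀ).det = (Y * Yᵀ).det := by
        rw [Matrix.det_mul, Matrix.det_transpose, Matrix.det_mul, Matrix.det_transpose, h2]
      have hr0 : r = 0 := by
        by_contra h0
        rcases lt_or_gt_of_ne h0 with hneg | hpos
        · have heq : Y * Yᵀ = X * Xᵀ + (-r) • (1 : Matrix (Fin n) (Fin n) ℝ) := by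
            rw [neg_smul, ← hr']; abel
          have hlt := det_lt_det_add_smul_one hn hXps (by linarith : (0:ℝ) < -r)
          rw [← heq] at hlt
          exact absurd hdet2 (ne_of_lt hlt)
        · have heq : X * Xᵀ = Y * Yᵀ + r • (1 : Matrix (Fin n) (Fin n) ℝ) := by
            rw [← hr']; abel
          have hlt := det_lt_det_add_smul_one hn hYps hpos
          rw [← heq] at hlt
          exact absurd hdet2.symm (ne_of_lt hlt)
      have hXY : X * Xᵀ = Y * Yᵀ := by
        rw [hr0, zero_smul] at hr'
        exact sub_eq_zero.mp hr'
      obtain ⟨C, hC, hYXC⟩ := exists_orthogonal X Y hXY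
      have hdC2 : C.det * C.det = 1 := by
        have h4 := congrArg Matrix.det hC
        rwa [Matrix.det_mul, Matrix.det_transpose, Matrix.det_one] at h4
      rcases mul_self_eq_one_iff.mp hdC2 with h1' | hm1
      · exact ⟨C, hC, h1', hYXC⟩
      · have hdX0 : X.det = 0 := by
          have h5 : Y.det = X.det * C.det := by rw [hYXC, Matrix.det_mul]
          rw [hm1] at h5
          rw [h2] at *
          linarith [h5]
        obtain ⟨R, hRo, hdR, hXR⟩ := exists_reflection_fixing X hdX0
        refine ⟨R * C, ?_, ?_, ?_⟩
        · rw [Matrix.transpose_mul, ← Matrix.mul_assoc, Matrix.mul_assoc R C, hC,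
            Matrix.mul_one, hRo]
        · rw [Matrix.det_mul, hdR, hm1]; ring
        · rw [← Matrix.mul_assoc, hXR, hYXC]
    · rintro ⟨C, hC, hdC, rfl⟩
      have hmm : X * C * (X * C)ᵀ = X * Xᵀ := by
        rw [Matrix.transpose_mul, ← Matrix.mul_assoc, Matrix.mul_assoc X C Cᵀ, hC,
          Matrix.mul_one]
      have hdd : (X * C).det = X.det := by rw [Matrix.det_mul, hdC, mul_one]
      unfold phi
      congr 1
      · exact congrArg _ (Subtype.ext hmm.symm)
      · exact hdd.symm
end
end

section
/- Let n, m ≥ 0 and consider the map π : Matrix (Fin n) (Fin m) ℝ → Sym(n,ℝ), π(X) = X Xᵀ, on real n×m matrices (viewed as linear maps ℝᵐ → ℝⁿ). Then the fibres of π coincide exactly with the orbits of the right action of the orthogonal group O(m) given by X ↦ X C⁻¹: that is, π(X) = π(Y) if and only if Y = X C for some C ∈ O(m). -/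
open Matrix
open scoped RealInnerProductSpace

private lemma toEuclideanLin_mul {m n p : ℕ} (M : Matrix (Fin m) (Fin n) ℝ)
    (N : Matrix (Fin n) (Fin p) ℝ) :
    Matrix.toEuclideanLin (M * N) =
      (Matrix.toEuclideanLin M).comp (Matrix.toEuclideanLin N) := by
  simp [Matrix.toEuclideanLin_eq_toLin, Matrix.toLin_mul _ (PiLp.basisFun 2 ℝ (Fin n)) _]

/-- The fibres of `π(X) = X Xᵀ` on real `n × m` matrices coincide with the orbits of the
right action `X ↦ X C⁻¹` of the orthogonal group `O(m)`. -/
theorem stmt10 (n m : ℕ) (X Y : Matrix (Fin n) (Fin m) ℝ) :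
    X * Xᵀ = Y * Yᵀ ↔
      ∃ C : Matrix (Fin m) (Fin m) ℝ, C * Cᵀ = 1 ∧ Y = X * C := by
  constructor
  · intro h
    set A : EuclideanSpace ℝ (Fin n) →ₗ[ℝ] EuclideanSpace ℝ (Fin m) :=
      Matrix.toEuclideanLin Xᵀ with hA
    set B : EuclideanSpace ℝ (Fin n) →ₗ[ℝ] EuclideanSpace ℝ (Fin m) :=
      Matrix.toEuclideanLin Yᵀ with hB
    -- inner products agree
    have key : ∀ v w : EuclideanSpace ℝ (Fin n), ⟪A v, A w⟫ = ⟪B v, B w⟫ := by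
      intro v w
      have h1 : ∀ (Z : Matrix (Fin n) (Fin m) ℝ),
          ⟪Matrix.toEuclideanLin Zᵀ v, Matrix.toEuclideanLin Zᵀ w⟫ =
            ⟪v, Matrix.toEuclideanLin (Z * Zᵀ) w⟫ := by
        intro Z
        rw [toEuclideanLin_mul]
        have : Matrix.toEuclideanLin Z = LinearMap.adjoint (Matrix.toEuclideanLin Zᵀ) := by
          rw [← Matrix.toEuclideanLin_conjTranspose_eq_adjoint]
          congr 1
        simp only [LinearMap.comp_apply, this]
        rw [LinearMap.adjoint_inner_right]
      rw [h1 X, h1 Y, h]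
    have hker : LinearMap.ker A ≤ LinearMap.ker B := by
      intro v hv
      rw [LinearMap.mem_ker] at hv ⊢
      have : ⟪B v, B v⟫ = 0 := by rw [← key v v, hv, inner_zero_left]
      exact inner_self_eq_zero.mp this
    -- build the isometry on the range of A
    let B' : (EuclideanSpace ℝ (Fin n) ⧸ LinearMap.ker A) →ₗ[ℝ] EuclideanSpace ℝ (Fin m) :=
      (LinearMap.ker A).liftQ B hker
    let g : (LinearMap.range A) →ₗ[ℝ] EuclideanSpace ℝ (Fin m) :=
      B'.comp (A.quotKerEquivRange.symm : _ →ₗ[ℝ] _)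
    have hg : ∀ v : EuclideanSpace ℝ (Fin n), ∀ hv : A v ∈ LinearMap.range A,
        g ⟨A v, hv⟩ = B v := by
      intro v hv
      have h2 : A.quotKerEquivRange (Submodule.Quotient.mk v) = ⟨A v, hv⟩ := by
        ext
        simp [LinearMap.quotKerEquivRange_apply_mk]
      have h3 : A.quotKerEquivRange.symm ⟨A v, hv⟩ = Submodule.Quotient.mk v := by
        rw [← h2, LinearEquiv.symm_apply_apply]
      simp only [g, LinearMap.comp_apply, LinearEquiv.coe_coe, h3]
      simp [B']
    have hgnorm : ∀ s : LinearMap.range A, ‖g s‖ = ‖s‖ := by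
      rintro ⟨_, v, rfl⟩
      rw [hg v ⟨v, rfl⟩]
      have : ⟪A v, A v⟫ = ⟪B v, B v⟫ := key v v
      rw [real_inner_self_eq_norm_sq, real_inner_self_eq_norm_sq] at this
      show ‖B v‖ = ‖A v‖
      nlinarith [norm_nonneg (A v), norm_nonneg (B v)]
    let f : (LinearMap.range A) →ₗᵢ[ℝ] EuclideanSpace ℝ (Fin m) := ⟨g, hgnorm⟩
    let L := f.extend
    have hL : ∀ v, L (A v) = B v := by
      intro v
      have : L (A v) = L ((⟨A v, ⟨v, rfl⟩⟩ : LinearMap.range A) : EuclideanSpace ℝ (Fin m)) := rfl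
      rw [this, f.extend_apply]
      exact hg v ⟨v, rfl⟩
    set M : Matrix (Fin m) (Fin m) ℝ := Matrix.toEuclideanLin.symm L.toLinearMap with hM
    have hMA : M * Xᵀ = Yᵀ := by
      apply Matrix.toEuclideanLin.injective
      rw [toEuclideanLin_mul]
      ext v i
      have : Matrix.toEuclideanLin M = L.toLinearMap := by
        rw [hM, LinearEquiv.apply_symm_apply]
      simp only [LinearMap.comp_apply, this, LinearIsometry.coe_toLinearMap]
      rw [← hA, ← hB, hL]
    have hMO : Mᵀ * M = 1 := by
      ext i j
      have := L.inner_map_map (EuclideanSpace.single i (1:ℝ)) (EuclideanSpace.single j (1:ℝ))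
      have hLs : ∀ k : Fin m, (L (EuclideanSpace.single k (1:ℝ))) = fun l => M l k := by
        intro k
        have h4 : Matrix.toEuclideanLin M = L.toLinearMap := by
          rw [hM, LinearEquiv.apply_symm_apply]
        ext l
        rw [← LinearIsometry.coe_toLinearMap, ← h4]
        rw [Matrix.toEuclideanLin_apply]
        have h5 : (EuclideanSpace.single k (1:ℝ)).ofLp
            = Pi.single k (1:ℝ) := rfl
        rw [h5, Matrix.mulVec_single]
        simp
      simp only [PiLp.inner_apply] at this
      rw [hLs i, hLs j] at this
      simp only [PiLp.inner_apply, RCLike.inner_apply, starRingEnd_apply, star_trivial] at this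
      simp only [EuclideanSpace.single_apply] at this
      rw [Matrix.mul_apply, Matrix.one_apply]
      simp only [Matrix.transpose_apply]
      rw [Finset.sum_congr rfl (fun x _ => mul_comm (M x i) (M x j)), this]
      simp [eq_comm]
    refine ⟨Mᵀ, ?_, ?_⟩
    · rw [Matrix.transpose_transpose]; exact hMO
    · have := congrArg Matrix.transpose hMA
      rw [Matrix.transpose_mul, Matrix.transpose_transpose] at this
      exact this.symm
  · rintro ⟨C, hC, rfl⟩
    rw [Matrix.transpose_mul, Matrix.mul_assoc, ← Matrix.mul_assoc C, hC, Matrix.one_mul]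
end

section
/- Let n, m ≥ 0 and consider the map π : Matrix (Fin n) (Fin m) ℂ → Herm(n), π(X) = X X*, on complex n×m matrices, where X* is the conjugate transpose. Then the fibres of π coincide exactly with the orbits of the right action of the unitary group U(m) given by X ↦ X C⁻¹: that is, π(X) = π(Y) if and only if Y = X C for some C ∈ U(m). -/
open Matrix

section aux

local notation "E" k => EuclideanSpace ℂ (Fin k)

private lemma teL_mul {a b c : ℕ} (M : Matrix (Fin a) (Fin b) ℂ)
    (N : Matrix (Fin b) (Fin c) ℂ) (u : E c) :
    Matrix.toEuclideanLin (M * N) u = Matrix.toEuclideanLin M (Matrix.toEuclideanLin N u) := by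
  simp [Matrix.toEuclideanLin_apply, Matrix.mulVec_mulVec]

private lemma inner_self_eq {a b : ℕ} (A : Matrix (Fin a) (Fin b) ℂ) (u : E a) :
    (inner ℂ u (Matrix.toEuclideanLin (A * Aᴴ) u) : ℂ) = (‖Matrix.toEuclideanLin Aᴴ u‖ : ℂ) ^ 2 := by
  rw [teL_mul, Matrix.toEuclideanLin_conjTranspose_eq_adjoint,
    ← LinearMap.adjoint_inner_left]
  exact inner_self_eq_norm_sq_to_K _

private lemma norm_eq_of_gram {a b : ℕ} {A B : Matrix (Fin a) (Fin b) ℂ}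
    (h : A * Aᴴ = B * Bᴴ) (u : E a) :
    ‖Matrix.toEuclideanLin Aᴴ u‖ = ‖Matrix.toEuclideanLin Bᴴ u‖ := by
  have h2 : ((‖Matrix.toEuclideanLin Aᴴ u‖ : ℂ)) ^ 2 = ((‖Matrix.toEuclideanLin Bᴴ u‖ : ℂ)) ^ 2 := by
    rw [← inner_self_eq, ← inner_self_eq, h]
  have h3 : ‖Matrix.toEuclideanLin Aᴴ u‖ ^ 2 = ‖Matrix.toEuclideanLin Bᴴ u‖ ^ 2 := by
    exact_mod_cast h2
  rw [← Real.sqrt_sq (norm_nonneg (Matrix.toEuclideanLin Aᴴ u)),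
    ← Real.sqrt_sq (norm_nonneg (Matrix.toEuclideanLin Bᴴ u)), h3]

end aux

/-- The fibres of `π(X) = X X*` on complex `n × m` matrices coincide with the orbits of the
right action `X ↦ X C⁻¹` of the unitary group `U(m)`. -/
theorem stmt12 (n m : ℕ) (X Y : Matrix (Fin n) (Fin m) ℂ) :
    X * Xᴴ = Y * Yᴴ ↔
      ∃ C : Matrix (Fin m) (Fin m) ℂ, C * Cᴴ = 1 ∧ Y = X * C := by
  constructor
  · intro h
    classical
    set fX : EuclideanSpace ℂ (Fin n) →ₗ[ℂ] EuclideanSpace ℂ (Fin m) :=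
      Matrix.toEuclideanLin Xᴴ with hfX
    set fY : EuclideanSpace ℂ (Fin n) →ₗ[ℂ] EuclideanSpace ℂ (Fin m) :=
      Matrix.toEuclideanLin Yᴴ with hfY
    have hnorm : ∀ u, ‖fX u‖ = ‖fY u‖ := fun u => norm_eq_of_gram h u
    have hker : LinearMap.ker fX = LinearMap.ker fY := by
      ext u
      simp only [LinearMap.mem_ker]
      rw [← norm_eq_zero, hnorm u, norm_eq_zero]
    -- the isometry from the range of fX
    let L0 : LinearMap.range fX →ₗ[ℂ] EuclideanSpace ℂ (Fin m) :=
      (Submodule.liftQ (LinearMap.ker fX) fY hker.le) ∘ₗ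
        (fX.quotKerEquivRange).symm.toLinearMap
    have hL0 : ∀ u : EuclideanSpace ℂ (Fin n),
        L0 ⟨fX u, LinearMap.mem_range_self fX u⟩ = fY u := by
      intro u
      have h1 : (fX.quotKerEquivRange).symm ⟨fX u, LinearMap.mem_range_self fX u⟩ =
          Submodule.Quotient.mk u := fX.quotKerEquivRange_symm_apply_image u _
      simp only [L0, LinearMap.comp_apply, LinearEquiv.coe_coe, h1]
      exact Submodule.liftQ_apply _ _ _
    have hL0norm : ∀ s : LinearMap.range fX, ‖L0 s‖ = ‖s‖ := by
      rintro ⟨s, u, rfl⟩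
      rw [hL0 u]
      exact (hnorm u).symm
    let L : LinearMap.range fX →ₗᵢ[ℂ] EuclideanSpace ℂ (Fin m) := ⟨L0, hL0norm⟩
    let U : EuclideanSpace ℂ (Fin m) →ₗᵢ[ℂ] EuclideanSpace ℂ (Fin m) := L.extend
    have hU : ∀ u, U (fX u) = fY u := by
      intro u
      have := L.extend_apply ⟨fX u, LinearMap.mem_range_self fX u⟩
      rw [this]
      exact hL0 u
    -- matrix of U
    set A : Matrix (Fin m) (Fin m) ℂ := Matrix.toEuclideanLin.symm U.toLinearMap with hA
    have hAU : Matrix.toEuclideanLin A = U.toLinearMap := Matrix.toEuclideanLin.apply_symm_apply _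
    refine ⟨Aᴴ, ?_, ?_⟩
    · -- Aᴴ * (Aᴴ)ᴴ = Aᴴ * A = 1
      rw [Matrix.conjTranspose_conjTranspose]
      apply Matrix.toEuclideanLin.injective
      apply LinearMap.ext
      intro u
      rw [teL_mul, hAU, Matrix.toEuclideanLin_conjTranspose_eq_adjoint, hAU]
      apply ext_inner_right ℂ
      intro y
      rw [LinearMap.adjoint_inner_left]
      simp only [LinearIsometry.coe_toLinearMap]
      rw [U.inner_map_map]
      simp [Matrix.toEuclideanLin_apply]
    · -- Y = X * Aᴴ
      have hXY : A * Xᴴ = Yᴴ := by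
        apply Matrix.toEuclideanLin.injective
        apply LinearMap.ext
        intro u
        rw [teL_mul, hAU]
        exact hU u
      calc Y = Yᴴᴴ := (Matrix.conjTranspose_conjTranspose Y).symm
        _ = (A * Xᴴ)ᴴ := by rw [hXY]
        _ = X * Aᴴ := by rw [Matrix.conjTranspose_mul, Matrix.conjTranspose_conjTranspose]
  · rintro ⟨C, hC, rfl⟩
    rw [Matrix.conjTranspose_mul, Matrix.mul_assoc X C, ← Matrix.mul_assoc C Cᴴ Xᴴ, hC,
      Matrix.one_mul]
end

section
/- The map γ : ℂ × ℂ → ℝ × ℂ, γ(λ, μ) = (|λ|² − |μ|², λμ), is surjective, and its fibres coincide exactly with the orbits of the action of the circle group 𝕋 = {c ∈ ℂ : |c| = 1} on ℂ × ℂ given by c · (λ, μ) = (cλ, c⁻¹μ): that is, γ(λ, μ) = γ(λ', μ') if and only if (λ', μ') = (cλ, c⁻¹μ) for some c ∈ ℂ with |c| = 1. -/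
/-- The map `γ(λ, μ) = (|λ|² − |μ|², λμ)`. -/
noncomputable def gamma (p : ℂ × ℂ) : ℝ × ℂ :=
  (‖p.1‖ ^ 2 - ‖p.2‖ ^ 2, p.1 * p.2)

private lemma sq_aux {x y : ℝ} (hx : 0 ≤ x) (hy : 0 ≤ y) (h : x ^ 2 = y ^ 2) :
    x = y := by
  nlinarith [sq_nonneg (x - y), sq_nonneg (x + y)]

/-- `γ` is surjective and its fibres coincide with the orbits of the circle-group action
`c · (λ, μ) = (cλ, c⁻¹μ)`. -/
theorem stmt16 :
    Function.Surjective gamma ∧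
    ∀ p q : ℂ × ℂ,
      gamma p = gamma q ↔
        ∃ c : ℂ, ‖c‖ = 1 ∧ q = (c * p.1, c⁻¹ * p.2) := by
  constructor
  · rintro ⟨t, z⟩
    set r := ‖z‖ with hr
    have hr0 : 0 ≤ r := norm_nonneg z
    set s := Real.sqrt (t ^ 2 + 4 * r ^ 2) with hsdef
    have hs : s ^ 2 = t ^ 2 + 4 * r ^ 2 := Real.sq_sqrt (by positivity)
    have hs0 : 0 ≤ s := Real.sqrt_nonneg _
    have hst : |t| ≤ s := by
      nlinarith [sq_abs t, abs_nonneg t]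
    set a := (t + s) / 2 with ha
    have ha0 : 0 ≤ a := by
      have := neg_abs_le t; simp only [ha]; linarith
    have hab : a * (a - t) = r ^ 2 := by
      have : a - t = (s - t) / 2 := by simp only [ha]; ring
      rw [this]; simp only [ha]; nlinarith
    by_cases h0 : a = 0
    · have hrz : r = 0 := by nlinarith
      have hz : z = 0 := by
        rwa [hr, norm_eq_zero] at hrz
      refine ⟨(0, (Real.sqrt (-t) : ℝ)), ?_⟩
      have ht : 0 ≤ -t := by nlinarith
      simp [gamma, hz, Complex.norm_real, abs_of_nonneg (Real.sqrt_nonneg (-t)),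
        Real.sq_sqrt ht]
    · have ha0' : 0 < a := lt_of_le_of_ne ha0 (Ne.symm h0)
      have hsa : Real.sqrt a ≠ 0 := by positivity
      have hsaC : ((Real.sqrt a : ℝ) : ℂ) ≠ 0 := by
        exact_mod_cast hsa
      refine ⟨((Real.sqrt a : ℝ), z / (Real.sqrt a : ℝ)), ?_⟩
      have habs : ‖((Real.sqrt a : ℝ) : ℂ)‖ = Real.sqrt a := by
        simp [Complex.norm_real, abs_of_nonneg (Real.sqrt_nonneg a)]
      have h1 : ‖((Real.sqrt a : ℝ) : ℂ)‖ ^ 2 = a := by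
        rw [habs, Real.sq_sqrt ha0]
      simp only [gamma, Prod.mk.injEq]
      constructor
      · rw [norm_div, h1, habs, div_pow, Real.sq_sqrt ha0]
        rw [← hr]
        field_simp
        nlinarith
      · field_simp
  · intro p q
    obtain ⟨l, m⟩ := p
    obtain ⟨l', m'⟩ := q
    constructor
    · intro h
      simp only [gamma, Prod.mk.injEq] at h
      obtain ⟨h1, h2⟩ := h
      have hmul : ‖l‖ * ‖m‖ = ‖l'‖ * ‖m'‖ := by
        rw [← norm_mul, ← norm_mul, h2]
      have hl0 := norm_nonneg l
      have hm0 := norm_nonneg m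
      have hl0' := norm_nonneg l'
      have hm0' := norm_nonneg m'
      have hAB : ‖l‖ ^ 2 * ‖m‖ ^ 2
          = ‖l'‖ ^ 2 * ‖m'‖ ^ 2 := by
        have := congrArg (· ^ 2) hmul
        simpa [mul_pow] using this
      have h1sq : (‖l‖ ^ 2 - ‖m‖ ^ 2) ^ 2
          = (‖l'‖ ^ 2 - ‖m'‖ ^ 2) ^ 2 := by rw [h1]
      have hs2 : (‖l‖ ^ 2 + ‖m‖ ^ 2) ^ 2
          = (‖l'‖ ^ 2 + ‖m'‖ ^ 2) ^ 2 := by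
        linear_combination h1sq + 4 * hAB
      have hsum : ‖l‖ ^ 2 + ‖m‖ ^ 2
          = ‖l'‖ ^ 2 + ‖m'‖ ^ 2 :=
        sq_aux (by positivity) (by positivity) hs2
      have hl : ‖l‖ = ‖l'‖ := by
        nlinarith [sq_nonneg (‖l‖ - ‖l'‖),
          sq_nonneg (‖l‖ + ‖l'‖)]
      have hm : ‖m‖ = ‖m'‖ := by
        nlinarith [sq_nonneg (‖m‖ - ‖m'‖),
          sq_nonneg (‖m‖ + ‖m'‖)]
      by_cases hlz : l = 0
      · have hlz' : l' = 0 :=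
          norm_eq_zero.mp (by rw [← hl, hlz, norm_zero])
        by_cases hmz : m = 0
        · have hmz' : m' = 0 :=
            norm_eq_zero.mp (by rw [← hm, hmz, norm_zero])
          exact ⟨1, by simp, by simp [hlz, hlz', hmz, hmz']⟩
        · have hm'z : m' ≠ 0 := fun h =>
            hmz (norm_eq_zero.mp (by rw [hm, h, norm_zero]))
          refine ⟨m / m', ?_, ?_⟩
          · rw [norm_div, ← hm, div_self]
            rw [norm_ne_zero_iff]; exact hmz
          · have e2 : (m / m')⁻¹ * m = m' := by
              rw [inv_div, div_mul_cancel₀ _ hmz]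
            rw [Prod.mk.injEq]
            refine ⟨by simp [hlz, hlz'], ?_⟩
            rw [inv_div, div_mul_cancel₀ _ hmz]
      · have hl'z : l' ≠ 0 := fun h =>
          hlz (norm_eq_zero.mp (by rw [hl, h, norm_zero]))
        refine ⟨l' / l, ?_, ?_⟩
        · rw [norm_div, hl, div_self]
          rw [norm_ne_zero_iff]; exact hl'z
        · have e1 : l' / l * l = l' := by field_simp
          have e2 : l / l' * m = m' := by
            field_simp
            linear_combination h2
          simp [e1, inv_div, e2]
    · rintro ⟨c, hc, hq⟩
      have hc0 : c ≠ 0 := by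
        intro h; rw [h, norm_zero] at hc; norm_num at hc
      rw [hq]
      simp only [gamma, Prod.mk.injEq, norm_mul, norm_inv, hc]
      constructor
      · ring
      · field_simp
end
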